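/- Let m and n be positive integers and let (a,b) ∈ G^{int}_{m,n}. Then it is not the case that both a ≤ m/(n+1) and (m+1)/n ≤ b hold. -/

import Mathlib

open Finset
open scoped Classical
open scoped ENNReal

/-- The generalized-Farey fraction set `G_{m,n} ⊆ [0,∞]`:
`{0,∞}` together with all `p/q` for `p ∈ [m]`, `q ∈ [n]`
(when `mn = 0` the latter set is empty). -/
def Gset (m n : ℕ) : Set ℝ≥0∞ :=
  {0, ⊤} ∪ {x | ∃ p ∈ Finset.Icc 1 m, ∃ q ∈ Finset.Icc 1 n, x = (p : ℝ≥0∞) / (q : ℝ≥0∞)}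

/-- The generalized Farey intervals of order `(m,n)`: pairs of adjacent elements of `G_{m,n}`. -/
def GInt (m n : ℕ) : Set (ℝ≥0∞ × ℝ≥0∞) :=
  {ab | ab.1 ∈ Gset m n ∧ ab.2 ∈ Gset m n ∧ ab.1 < ab.2 ∧
    ∀ c ∈ Gset m n, ¬(ab.1 < c ∧ c < ab.2)}

/-- for `(a,b) ∈ G^{int}_{m,n}` it is impossible that both `a ≤ m/(n+1)`
and `(m+1)/n ≤ b`. -/
theorem not_le_and_le (m n : ℕ) (hm : 1 ≤ m) (hn : 1 ≤ n)
    (a b : ℝ≥0∞) (hab : (a, b) ∈ GInt m n) :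
    ¬(a ≤ (m : ℝ≥0∞) / ((n : ℝ≥0∞) + 1) ∧ ((m : ℝ≥0∞) + 1) / (n : ℝ≥0∞) ≤ b) := by
  rintro ⟨ha, hb⟩
  obtain ⟨-, -, -, hadj⟩ := hab
  have hm0 : (m : ℝ≥0∞) ≠ 0 := by exact_mod_cast Nat.one_le_iff_ne_zero.mp hm
  have hn0 : (n : ℝ≥0∞) ≠ 0 := by exact_mod_cast Nat.one_le_iff_ne_zero.mp hn
  have hmem : (m : ℝ≥0∞) / (n : ℝ≥0∞) ∈ Gset m n := by
    right
    exact ⟨m, Finset.mem_Icc.mpr ⟨hm, le_rfl⟩, n, Finset.mem_Icc.mpr ⟨hn, le_rfl⟩, rfl⟩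
  refine hadj _ hmem ⟨?_, ?_⟩
  · refine lt_of_le_of_lt ha ?_
    rw [div_eq_mul_inv, div_eq_mul_inv, ENNReal.mul_lt_mul_iff_right hm0 (ENNReal.natCast_ne_top m)]
    exact ENNReal.inv_lt_inv.mpr (ENNReal.lt_add_right (ENNReal.natCast_ne_top n) one_ne_zero)
  · refine lt_of_lt_of_le ?_ hb
    rw [div_eq_mul_inv, div_eq_mul_inv,
      ENNReal.mul_lt_mul_iff_left (ENNReal.inv_ne_zero.mpr (ENNReal.natCast_ne_top n))
        (ENNReal.inv_ne_top.mpr hn0)]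
    exact ENNReal.lt_add_right (ENNReal.natCast_ne_top m) one_ne_zero
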